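/- Let P : ℝ^d → Matrix (Fin d) (Fin d) ℝ be smooth and skew-symmetric. Define bilinear operations on smooth functions: B₀(f,g) = f·g, B₁(f,g) = Σ P^{ij} ∂_i f ∂_j g, and B₂(f,g) = (1/2) Σ P^{ij} P^{kℓ} ∂_k∂_i f ∂_ℓ∂_j g + (1/3) Σ (∂_ℓ P^{ij}) P^{kℓ} ∂_k∂_i f ∂_j g - (1/3) Σ (∂_ℓ P^{ij}) P^{kℓ} ∂_i f ∂_k∂_j g - (1/6) Σ (∂_ℓ P^{ij})(∂_j P^{kℓ}) ∂_i f ∂_k g. Then the ħ²-coefficient of the associator of ⋆ = B₀ + ħB₁ + ħ²B₂, namely A₂(f,g,h) = B₂(B₀(f,g),h) + B₁(B₁(f,g),h) + B₀(B₂(f,g),h) - B₂(f,B₀(g,h)) - B₁(f,B₁(g,h)) - B₀(f,B₂(g,h)), equals (2/3) · Σ_{i,j,k} [ Σ_ℓ ( P^{ℓk} ∂_ℓ P^{ij} + P^{ℓi} ∂_ℓ P^{jk} + P^{ℓj} ∂_ℓ P^{ki} ) ] · ∂_i f · ∂_j g · ∂_k h for all smooth f, g, h. -/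

import Mathlib

/-- The `i`-th partial derivative of a function on `ℝ^d`. -/
noncomputable def pd {d : ℕ} (i : Fin d) (f : (Fin d → ℝ) → ℝ) : (Fin d → ℝ) → ℝ :=
  fun x => fderiv ℝ f x (Pi.single i 1)

/-- Order-ħ⁰ term of the Kontsevich star-product: the pointwise product. -/
def B0 {d : ℕ} (f g : (Fin d → ℝ) → ℝ) : (Fin d → ℝ) → ℝ := fun x => f x * g x

/-- Order-ħ¹ term of the Kontsevich star-product: `B₁(f,g) = Σ P^{ij} ∂_i f ∂_j g`. -/
noncomputable def B1 {d : ℕ} (P : (Fin d → ℝ) → Matrix (Fin d) (Fin d) ℝ)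
    (f g : (Fin d → ℝ) → ℝ) : (Fin d → ℝ) → ℝ :=
  fun x => ∑ i, ∑ j, P x i j * pd i f x * pd j g x

/-- Order-ħ² term of the Kontsevich star-product, with coefficients
`1/2, 1/3, -1/3, -1/6`. -/
noncomputable def B2 {d : ℕ} (P : (Fin d → ℝ) → Matrix (Fin d) (Fin d) ℝ)
    (f g : (Fin d → ℝ) → ℝ) : (Fin d → ℝ) → ℝ := fun x =>
  (1 / 2) * (∑ i, ∑ j, ∑ k, ∑ l,
      P x i j * P x k l * pd k (pd i f) x * pd l (pd j g) x)
  + (1 / 3) * (∑ i, ∑ j, ∑ k, ∑ l,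
      pd l (fun y => P y i j) x * P x k l * pd k (pd i f) x * pd j g x)
  - (1 / 3) * (∑ i, ∑ j, ∑ k, ∑ l,
      pd l (fun y => P y i j) x * P x k l * pd i f x * pd k (pd j g) x)
  - (1 / 6) * (∑ i, ∑ j, ∑ k, ∑ l,
      pd l (fun y => P y i j) x * pd j (fun y => P y k l) x * pd i f x * pd k g x)

section helpers
variable {d : ℕ}

lemma contDiff_pd {f : (Fin d → ℝ) → ℝ} (hf : ContDiff ℝ (⊤ : ℕ∞) f) (i : Fin d) :
    ContDiff ℝ (⊤ : ℕ∞) (pd i f) := by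
  have h1 : ContDiff ℝ (⊤ : ℕ∞) (fderiv ℝ f) := hf.fderiv_right (by exact_mod_cast le_top)
  exact h1.clm_apply contDiff_const

lemma diffAt {E : Type*} [NormedAddCommGroup E] [NormedSpace ℝ E] {f : (Fin d → ℝ) → E}
    (hf : ContDiff ℝ (⊤ : ℕ∞) f) (x : Fin d → ℝ) :
    DifferentiableAt ℝ f x := (hf.differentiable (by simp)) x

lemma pd_add {f g : (Fin d → ℝ) → ℝ} (i : Fin d) (x : Fin d → ℝ)
    (hf : DifferentiableAt ℝ f x) (hg : DifferentiableAt ℝ g x) :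
    pd i (fun y => f y + g y) x = pd i f x + pd i g x := by
  simp [pd, fderiv_fun_add hf hg]

lemma pd_mul {f g : (Fin d → ℝ) → ℝ} (i : Fin d) (x : Fin d → ℝ)
    (hf : DifferentiableAt ℝ f x) (hg : DifferentiableAt ℝ g x) :
    pd i (fun y => f y * g y) x = pd i f x * g x + f x * pd i g x := by
  simp [pd, fderiv_fun_mul hf hg]; ring

lemma pd_mul3 {p q r : (Fin d → ℝ) → ℝ} (i : Fin d) (x : Fin d → ℝ)
    (hp : DifferentiableAt ℝ p x) (hq : DifferentiableAt ℝ q x) (hr : DifferentiableAt ℝ r x) :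
    pd i (fun y => p y * q y * r y) x
      = pd i p x * q x * r x + p x * pd i q x * r x + p x * q x * pd i r x := by
  rw [pd_mul i x (hp.fun_mul hq) hr, pd_mul i x hp hq]; ring

lemma pd_sum {ι : Type*} (s : Finset ι) (F : ι → (Fin d → ℝ) → ℝ) (i : Fin d) (x : Fin d → ℝ)
    (hF : ∀ j ∈ s, DifferentiableAt ℝ (F j) x) :
    pd i (fun y => ∑ j ∈ s, F j y) x = ∑ j ∈ s, pd i (F j) x := by
  simp [pd, fderiv_fun_sum hF]

lemma pd_comm {f : (Fin d → ℝ) → ℝ} (hf : ContDiff ℝ (⊤ : ℕ∞) f) (i j : Fin d) (x : Fin d → ℝ) :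
    pd i (pd j f) x = pd j (pd i f) x := by
  have hdf : ContDiff ℝ (⊤ : ℕ∞) (fderiv ℝ f) := hf.fderiv_right (by exact_mod_cast le_top)
  have key : ∀ a b : Fin d, pd a (pd b f) x
      = fderiv ℝ (fderiv ℝ f) x (Pi.single a 1) (Pi.single b 1) := by
    intro a b
    have hb : pd b f = fun y => (fderiv ℝ f y) (Pi.single b 1) := rfl
    rw [pd, hb, fderiv_clm_apply ((hdf.differentiable (by simp)) x)
      (differentiableAt_const _)]
    simp
  rw [key, key]
  exact second_derivative_symmetric (fun y => (diffAt hf y).hasFDerivAt)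
    ((hdf.differentiable (by simp)) x).hasFDerivAt _ _

lemma pd2_mul {f g : (Fin d → ℝ) → ℝ} (hf : ContDiff ℝ (⊤ : ℕ∞) f)
    (hg : ContDiff ℝ (⊤ : ℕ∞) g) (k i : Fin d) (x : Fin d → ℝ) :
    pd k (pd i (fun y => f y * g y)) x
      = pd k (pd i f) x * g x + pd i f x * pd k g x
        + (pd k f x * pd i g x + f x * pd k (pd i g) x) := by
  have hfun : pd i (fun y => f y * g y) = fun y => pd i f y * g y + f y * pd i g y :=
    funext fun y => pd_mul i y (diffAt hf y) (diffAt hg y)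
  rw [hfun, pd_add k x ((diffAt (contDiff_pd hf i) x).fun_mul (diffAt hg x))
      ((diffAt hf x).fun_mul (diffAt (contDiff_pd hg i) x)),
    pd_mul k x (diffAt (contDiff_pd hf i) x) (diffAt hg x),
    pd_mul k x (diffAt hf x) (diffAt (contDiff_pd hg i) x)]

lemma pd_B1_exp (P : (Fin d → ℝ) → Matrix (Fin d) (Fin d) ℝ)
    (hP : ∀ i j, ContDiff ℝ (⊤ : ℕ∞) fun y => P y i j)
    {u v : (Fin d → ℝ) → ℝ} (hu : ContDiff ℝ (⊤ : ℕ∞) u) (hv : ContDiff ℝ (⊤ : ℕ∞) v)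
    (a : Fin d) (x : Fin d → ℝ) :
    pd a (fun y => ∑ k, ∑ l, P y k l * pd k u y * pd l v y) x
      = ∑ k, ∑ l, (pd a (fun y => P y k l) x * pd k u x * pd l v x
          + P x k l * pd a (pd k u) x * pd l v x
          + P x k l * pd k u x * pd a (pd l v) x) := by
  rw [pd_sum Finset.univ (fun k => fun y => ∑ l, P y k l * pd k u y * pd l v y) a x
    (fun k _ => DifferentiableAt.fun_sum fun l _ =>
      ((diffAt (hP k l) x).mul (diffAt (contDiff_pd hu k) x)).mul
        (diffAt (contDiff_pd hv l) x))]
  refine Finset.sum_congr rfl fun k _ => ?_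
  rw [pd_sum Finset.univ (fun l => fun y => P y k l * pd k u y * pd l v y) a x
    (fun l _ => ((diffAt (hP k l) x).mul (diffAt (contDiff_pd hu k) x)).mul
      (diffAt (contDiff_pd hv l) x))]
  refine Finset.sum_congr rfl fun l _ => ?_
  exact pd_mul3 a x (diffAt (hP k l) x) (diffAt (contDiff_pd hu k) x)
    (diffAt (contDiff_pd hv l) x)

lemma sum4_prod (F : Fin d → Fin d → Fin d → Fin d → ℝ) :
    (∑ p : Fin d × Fin d × Fin d × Fin d, F p.1 p.2.1 p.2.2.1 p.2.2.2)
      = ∑ i, ∑ j, ∑ k, ∑ l, F i j k l := by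
  rw [Fintype.sum_prod_type]
  refine Finset.sum_congr rfl fun i _ => ?_
  rw [Fintype.sum_prod_type]
  refine Finset.sum_congr rfl fun j _ => ?_
  rw [Fintype.sum_prod_type]

lemma sum4_perm (F G : Fin d → Fin d → Fin d → Fin d → ℝ)
    (e : (Fin d × Fin d × Fin d × Fin d) ≃ (Fin d × Fin d × Fin d × Fin d))
    (hc : ∀ p : Fin d × Fin d × Fin d × Fin d,
      F p.1 p.2.1 p.2.2.1 p.2.2.2 = G (e p).1 (e p).2.1 (e p).2.2.1 (e p).2.2.2) :
    (∑ i, ∑ j, ∑ k, ∑ l, F i j k l) = ∑ i, ∑ j, ∑ k, ∑ l, G i j k l := by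
  rw [← sum4_prod F, ← sum4_prod G]
  exact Fintype.sum_equiv e _ _ hc

lemma sum4_const_out (G : Fin d → Fin d → Fin d → Fin d → ℝ) (c : ℝ) :
    (∑ i, ∑ j, ∑ k, ∑ l, c * G i j k l) = c * ∑ i, ∑ j, ∑ k, ∑ l, G i j k l := by
  simp only [← Finset.mul_sum]

lemma sum4_perm_smul (F G : Fin d → Fin d → Fin d → Fin d → ℝ) (c : ℝ)
    (e : (Fin d × Fin d × Fin d × Fin d) ≃ (Fin d × Fin d × Fin d × Fin d))
    (hc : ∀ p : Fin d × Fin d × Fin d × Fin d,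
      F p.1 p.2.1 p.2.2.1 p.2.2.2
        = c * G (e p).1 (e p).2.1 (e p).2.2.1 (e p).2.2.2) :
    (∑ i, ∑ j, ∑ k, ∑ l, F i j k l) = c * ∑ i, ∑ j, ∑ k, ∑ l, G i j k l := by
  rw [sum4_perm F (fun i j k l => c * G i j k l) e hc, sum4_const_out]

end helpers

set_option maxHeartbeats 16000000 in
theorem associator_order_two_factorization {d : ℕ}
    (P : (Fin d → ℝ) → Matrix (Fin d) (Fin d) ℝ)
    (hP : ∀ i j, ContDiff ℝ (⊤ : ℕ∞) fun x => P x i j)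
    (hskew : ∀ x i j, P x i j = - P x j i)
    (f g h : (Fin d → ℝ) → ℝ)
    (hf : ContDiff ℝ (⊤ : ℕ∞) f) (hg : ContDiff ℝ (⊤ : ℕ∞) g)
    (hh : ContDiff ℝ (⊤ : ℕ∞) h) (x : Fin d → ℝ) :
    B2 P (B0 f g) h x + B1 P (B1 P f g) h x + B0 (B2 P f g) h x
      - B2 P f (B0 g h) x - B1 P f (B1 P g h) x - B0 f (B2 P g h) x =
    (2 / 3) * ∑ i, ∑ j, ∑ k,
      (∑ l, (P x l k * pd l (fun y => P y i j) x
        + P x l i * pd l (fun y => P y j k) x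
        + P x l j * pd l (fun y => P y k i) x)) *
      pd i f x * pd j g x * pd k h x := by
  have hDskew : ∀ (l i j : Fin d), pd l (fun y => P y j i) x = - pd l (fun y => P y i j) x := by
    intro l i j
    have e : (fun y => P y j i) = fun y => -P y i j := funext fun y => hskew y j i
    rw [e]
    simp [pd, fderiv_neg]
  have h1fg : ∀ i : Fin d, pd i (fun y => f y * g y) x = pd i f x * g x + f x * pd i g x :=
    fun i => pd_mul i x (diffAt hf x) (diffAt hg x)
  have h1gh : ∀ j : Fin d, pd j (fun y => g y * h y) x = pd j g x * h x + g x * pd j h x :=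
    fun j => pd_mul j x (diffAt hg x) (diffAt hh x)
  have h2fg : ∀ k i : Fin d, pd k (pd i (fun y => f y * g y)) x
      = pd k (pd i f) x * g x + pd i f x * pd k g x
        + (pd k f x * pd i g x + f x * pd k (pd i g) x) :=
    fun k i => pd2_mul hf hg k i x
  have h2gh : ∀ k i : Fin d, pd k (pd i (fun y => g y * h y)) x
      = pd k (pd i g) x * h x + pd i g x * pd k h x
        + (pd k g x * pd i h x + g x * pd k (pd i h) x) :=
    fun k i => pd2_mul hg hh k i x
  have hB1fg : ∀ a : Fin d, pd a (fun y => ∑ k, ∑ l, P y k l * pd k f y * pd l g y) x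
      = ∑ k, ∑ l, (pd a (fun y => P y k l) x * pd k f x * pd l g x
          + P x k l * pd a (pd k f) x * pd l g x
          + P x k l * pd k f x * pd a (pd l g) x) :=
    fun a => pd_B1_exp P hP hf hg a x
  have hB1gh : ∀ a : Fin d, pd a (fun y => ∑ k, ∑ l, P y k l * pd k g y * pd l h y) x
      = ∑ k, ∑ l, (pd a (fun y => P y k l) x * pd k g x * pd l h x
          + P x k l * pd a (pd k g) x * pd l h x
          + P x k l * pd k g x * pd a (pd l h) x) :=
    fun a => pd_B1_exp P hP hg hh a x
  -- congruence identities matching the post-ring_nf goal atoms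
  have c1 : (∑ i, ∑ j, ∑ k, ∑ l,
        f x * (1 / 2) * P x i j * P x k l * pd k (pd i g) x * pd l (pd j h) x)
      = (∑ i, ∑ j, ∑ k, ∑ l,
        1 / 2 * P x i j * P x k l * f x * pd k (pd i g) x * pd l (pd j h) x) := by
    refine sum4_perm _ _ (Equiv.refl _) ?_
    rintro ⟨i, j, k, l⟩; simp only [Equiv.refl_apply]; ring
  have c2 : (∑ i, ∑ j, ∑ k, ∑ l,
        f x * (1 / 3) * pd l (fun y => P y i j) x * P x k l * pd k (pd i g) x * pd j h x)
      = (∑ i, ∑ j, ∑ k, ∑ l,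
        1 / 3 * pd l (fun y => P y i j) x * P x k l * f x * pd k (pd i g) x * pd j h x) := by
    refine sum4_perm _ _ (Equiv.refl _) ?_
    rintro ⟨i, j, k, l⟩; simp only [Equiv.refl_apply]; ring
  have c3 : (∑ i, ∑ j, ∑ k, ∑ l,
        f x * (1 / 3) * pd l (fun y => P y i j) x * P x k l * pd i g x * pd k (pd j h) x)
      = (∑ i, ∑ j, ∑ k, ∑ l,
        1 / 3 * pd l (fun y => P y i j) x * P x k l * f x * pd i g x * pd k (pd j h) x) := by
    refine sum4_perm _ _ (Equiv.refl _) ?_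
    rintro ⟨i, j, k, l⟩; simp only [Equiv.refl_apply]; ring
  have c4 : (∑ i, ∑ j, ∑ k, ∑ l,
        f x * (1 / 6) * pd l (fun y => P y i j) x * pd j (fun y => P y k l) x * pd i g x * pd k h x)
      = (∑ i, ∑ j, ∑ k, ∑ l,
        1 / 6 * pd l (fun y => P y i j) x * pd j (fun y => P y k l) x * f x * pd i g x * pd k h x) := by
    refine sum4_perm _ _ (Equiv.refl _) ?_
    rintro ⟨i, j, k, l⟩; simp only [Equiv.refl_apply]; ring
  have c5 : (∑ i, ∑ j, ∑ k, ∑ l,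
        P x i j * P x k l * pd k (pd i f) x * g x * pd l (pd j h) x * (1 / 2))
      = (∑ i, ∑ j, ∑ k, ∑ l,
        1 / 2 * P x i j * P x k l * pd k (pd i f) x * g x * pd l (pd j h) x) := by
    refine sum4_perm _ _ (Equiv.refl _) ?_
    rintro ⟨i, j, k, l⟩; simp only [Equiv.refl_apply]; ring
  -- permutation identities
  have e11 : (∑ i, ∑ j, ∑ k, ∑ l,
        P x i j * P x k l * pd i (pd k f) x * pd l g x * pd j h x)
      = (∑ i, ∑ j, ∑ k, ∑ l,
        P x i j * P x k l * pd k (pd i f) x * pd j g x * pd l h x) := by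
    refine sum4_perm _ _ ⟨fun p => (p.2.2.1, p.2.2.2, p.1, p.2.1),
      fun p => (p.2.2.1, p.2.2.2, p.1, p.2.1), fun p => rfl, fun p => rfl⟩ ?_
    rintro ⟨i, j, k, l⟩; simp only [Equiv.coe_fn_mk]; ring
  have e13 : (∑ i, ∑ j, ∑ k, ∑ l,
        1 / 2 * P x i j * P x k l * pd k (pd i f) x * pd j g x * pd l h x)
      = (1/2 : ℝ) * (∑ i, ∑ j, ∑ k, ∑ l,
        P x i j * P x k l * pd k (pd i f) x * pd j g x * pd l h x) := by
    refine sum4_perm_smul _ _ _ (Equiv.refl _) ?_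
    rintro ⟨i, j, k, l⟩; simp only [Equiv.refl_apply]; ring
  have e14 : (∑ i, ∑ j, ∑ k, ∑ l,
        1 / 2 * P x i j * P x k l * pd k (pd i f) x * pd l g x * pd j h x)
      = (1/2 : ℝ) * (∑ i, ∑ j, ∑ k, ∑ l,
        P x i j * P x k l * pd k (pd i f) x * pd j g x * pd l h x) := by
    refine sum4_perm_smul _ _ _ ⟨fun p => (p.2.2.1, p.2.2.2, p.1, p.2.1),
      fun p => (p.2.2.1, p.2.2.2, p.1, p.2.1), fun p => rfl, fun p => rfl⟩ ?_
    rintro ⟨i, j, k, l⟩; simp only [Equiv.coe_fn_mk]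
    rw [pd_comm hf k i x]; ring
  have e2 : (∑ i, ∑ j, ∑ k, ∑ l,
        1 / 2 * P x i j * P x k l * pd i f x * pd k g x * pd l (pd j h) x)
      = (1/2 : ℝ) * (∑ i, ∑ j, ∑ k, ∑ l,
        P x i j * P x k l * pd i f x * pd k g x * pd l (pd j h) x) := by
    refine sum4_perm_smul _ _ _ (Equiv.refl _) ?_
    rintro ⟨i, j, k, l⟩; simp only [Equiv.refl_apply]; ring
  have e3 : (∑ i, ∑ j, ∑ k, ∑ l,
        1 / 2 * P x i j * P x k l * pd k f x * pd i g x * pd l (pd j h) x)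
      = (1/2 : ℝ) * (∑ i, ∑ j, ∑ k, ∑ l,
        P x i j * P x k l * pd i f x * pd k g x * pd l (pd j h) x) := by
    refine sum4_perm_smul _ _ _ ⟨fun p => (p.2.2.1, p.2.2.2, p.1, p.2.1),
      fun p => (p.2.2.1, p.2.2.2, p.1, p.2.1), fun p => rfl, fun p => rfl⟩ ?_
    rintro ⟨i, j, k, l⟩; simp only [Equiv.coe_fn_mk]
    rw [pd_comm hh l j x]; ring
  have e19 : (∑ i, ∑ j, ∑ k, ∑ l,
        P x i j * pd i f x * P x k l * pd k g x * pd j (pd l h) x)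
      = (∑ i, ∑ j, ∑ k, ∑ l,
        P x i j * P x k l * pd i f x * pd k g x * pd l (pd j h) x) := by
    refine sum4_perm _ _ (Equiv.refl _) ?_
    rintro ⟨i, j, k, l⟩; simp only [Equiv.refl_apply]
    rw [pd_comm hh j l x]; ring
  have e18 : (∑ i, ∑ j, ∑ k, ∑ l,
        P x i j * pd i f x * P x k l * pd j (pd k g) x * pd l h x)
      = (∑ i, ∑ j, ∑ k, ∑ l,
        P x i j * P x k l * pd k f x * pd i (pd l g) x * pd j h x) := by
    refine sum4_perm _ _ ⟨fun p => (p.2.2.1, p.2.2.2, p.1, p.2.1),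
      fun p => (p.2.2.1, p.2.2.2, p.1, p.2.1), fun p => rfl, fun p => rfl⟩ ?_
    rintro ⟨i, j, k, l⟩; simp only [Equiv.coe_fn_mk]
    rw [pd_comm hg j k x]; ring
  have e5 : (∑ i, ∑ j, ∑ k, ∑ l,
        1 / 3 * pd l (fun y => P y i j) x * P x k l * pd i f x * pd k g x * pd j h x)
      = (1/3 : ℝ) * (∑ i, ∑ j, ∑ k, ∑ l,
        P x l j * pd l (fun y => P y k i) x * pd i f x * pd j g x * pd k h x) := by
    refine sum4_perm_smul _ _ _ ⟨fun p => (p.1, p.2.2.1, p.2.1, p.2.2.2),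
      fun p => (p.1, p.2.2.1, p.2.1, p.2.2.2), fun p => rfl, fun p => rfl⟩ ?_
    rintro ⟨i, j, k, l⟩; simp only [Equiv.coe_fn_mk]
    rw [hskew x k l, hDskew l i j]; ring
  have e6 : (∑ i, ∑ j, ∑ k, ∑ l,
        1 / 3 * pd l (fun y => P y i j) x * P x k l * pd k f x * pd i g x * pd j h x)
      = (-1/3 : ℝ) * (∑ i, ∑ j, ∑ k, ∑ l,
        P x l i * pd l (fun y => P y j k) x * pd i f x * pd j g x * pd k h x) := by
    refine sum4_perm_smul _ _ _ ⟨fun p => (p.2.2.1, p.1, p.2.1, p.2.2.2),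
      fun p => (p.2.1, p.2.2.1, p.1, p.2.2.2), fun p => rfl, fun p => rfl⟩ ?_
    rintro ⟨i, j, k, l⟩; simp only [Equiv.coe_fn_mk]
    rw [hskew x k l]; ring
  have e16 : (∑ i, ∑ j, ∑ k, ∑ l,
        1 / 3 * pd l (fun y => P y i j) x * P x k l * pd i f x * pd j g x * pd k h x)
      = (-1/3 : ℝ) * (∑ i, ∑ j, ∑ k, ∑ l,
        P x l k * pd l (fun y => P y i j) x * pd i f x * pd j g x * pd k h x) := by
    refine sum4_perm_smul _ _ _ (Equiv.refl _) ?_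
    rintro ⟨i, j, k, l⟩; simp only [Equiv.refl_apply]
    rw [hskew x k l]; ring
  have e10 : (∑ i, ∑ j, ∑ k, ∑ l,
        P x i j * pd i (fun y => P y k l) x * pd k f x * pd l g x * pd j h x)
      = (∑ i, ∑ j, ∑ k, ∑ l,
        P x l k * pd l (fun y => P y i j) x * pd i f x * pd j g x * pd k h x) := by
    refine sum4_perm _ _ ⟨fun p => (p.2.2.1, p.2.2.2, p.2.1, p.1),
      fun p => (p.2.2.2, p.2.2.1, p.1, p.2.1), fun p => rfl, fun p => rfl⟩ ?_
    rintro ⟨i, j, k, l⟩; simp only [Equiv.coe_fn_mk]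
  have e17 : (∑ i, ∑ j, ∑ k, ∑ l,
        P x i j * pd i f x * pd j (fun y => P y k l) x * pd k g x * pd l h x)
      = (-1 : ℝ) * (∑ i, ∑ j, ∑ k, ∑ l,
        P x l i * pd l (fun y => P y j k) x * pd i f x * pd j g x * pd k h x) := by
    refine sum4_perm_smul _ _ _ ⟨fun p => (p.1, p.2.2.1, p.2.2.2, p.2.1),
      fun p => (p.1, p.2.2.2, p.2.1, p.2.2.1), fun p => rfl, fun p => rfl⟩ ?_
    rintro ⟨i, j, k, l⟩; simp only [Equiv.coe_fn_mk]
    rw [hskew x i j]; ring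
  have er1 : (∑ i, ∑ j, ∑ k, ∑ l,
        2 / 3 * P x l k * pd l (fun y => P y i j) x * pd i f x * pd j g x * pd k h x)
      = (2/3 : ℝ) * (∑ i, ∑ j, ∑ k, ∑ l,
        P x l k * pd l (fun y => P y i j) x * pd i f x * pd j g x * pd k h x) := by
    refine sum4_perm_smul _ _ _ (Equiv.refl _) ?_
    rintro ⟨i, j, k, l⟩; simp only [Equiv.refl_apply]; ring
  have er2 : (∑ i, ∑ j, ∑ k, ∑ l,
        2 / 3 * P x l i * pd l (fun y => P y j k) x * pd i f x * pd j g x * pd k h x)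
      = (2/3 : ℝ) * (∑ i, ∑ j, ∑ k, ∑ l,
        P x l i * pd l (fun y => P y j k) x * pd i f x * pd j g x * pd k h x) := by
    refine sum4_perm_smul _ _ _ (Equiv.refl _) ?_
    rintro ⟨i, j, k, l⟩; simp only [Equiv.refl_apply]; ring
  have er3 : (∑ i, ∑ j, ∑ k, ∑ l,
        2 / 3 * P x l j * pd l (fun y => P y k i) x * pd i f x * pd j g x * pd k h x)
      = (2/3 : ℝ) * (∑ i, ∑ j, ∑ k, ∑ l,
        P x l j * pd l (fun y => P y k i) x * pd i f x * pd j g x * pd k h x) := by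
    refine sum4_perm_smul _ _ _ (Equiv.refl _) ?_
    rintro ⟨i, j, k, l⟩; simp only [Equiv.refl_apply]; ring
  have hB0fgF : B0 f g = fun y => f y * g y := rfl
  have hB0ghF : B0 g h = fun y => g y * h y := rfl
  have hB1fgF : B1 P f g = fun y => ∑ k, ∑ l, P y k l * pd k f y * pd l g y := rfl
  have hB1ghF : B1 P g h = fun y => ∑ k, ∑ l, P y k l * pd k g y * pd l h y := rfl
  simp only [B2, B1, B0, hB0fgF, hB0ghF, hB1fgF, hB1ghF]
  simp only [h2fg, h1fg, h2gh, h1gh, hB1fg, hB1gh]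
  simp only [mul_add, add_mul, mul_sub, sub_mul, neg_mul, mul_neg, Finset.mul_sum,
    Finset.sum_mul, Finset.sum_add_distrib, Finset.sum_sub_distrib, Finset.sum_neg_distrib]
  have c6 : (∑ i, ∑ j, ∑ k, ∑ l,
        h x * P x i j * P x k l * pd k (pd i f) x * pd l (pd j g) x * (1 / 2))
      = (∑ i, ∑ j, ∑ k, ∑ l,
        P x i j * P x k l * pd k (pd i f) x * pd l (pd j g) x * h x * (1 / 2)) := by
    refine sum4_perm _ _ (Equiv.refl _) ?_
    rintro ⟨i, j, k, l⟩; simp only [Equiv.refl_apply]; ring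
  ring_nf at c1 c2 c3 c4 c5 e11 e13 e14 e2 e3 e19 e18 e5 e6 e16 e10 e17 er1 er2 er3 ⊢
  linarith [c6, c1, c2, c3, c4, c5, e11, e13, e14, e2, e3, e19, e18, e5, e6, e16, e10, e17,
    er1, er2, er3]
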